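/- There exists a constant 𝓜_e ≥ 1, depending only on β_e, D_{3,2}, γ, Ω, such that the operator norm of exp(𝓛τ) is bounded by 𝓜_e uniformly for all τ ∈ ℝ, where 𝓛 is the matrix with rows (0,0,ā), (0,0,b̄), (2β_e γ, 2β_e Ω, 0), ā = -D_{3,2}Ω - β_e γ, b̄ = D_{3,2}γ - β_e Ω, γ² + Ω² = 1, β_e > 0. -/

import Mathlib

set_option maxHeartbeats 1000000


open Matrix

/-- mulVec bound for 3×3 matrices with entries bounded by `C`, in the sup norm. -/
lemma mulVec_norm_le_aux (M : Matrix (Fin 3) (Fin 3) ℝ) (C : ℝ)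
    (h : ∀ i j, |M i j| ≤ C) (v : Fin 3 → ℝ) :
    ‖M.mulVec v‖ ≤ 3 * C * ‖v‖ := by
  have hC : 0 ≤ C := le_trans (abs_nonneg _) (h 0 0)
  rw [pi_norm_le_iff_of_nonneg (by positivity)]
  intro i
  have : M.mulVec v i = ∑ j, M i j * v j := rfl
  rw [Real.norm_eq_abs, this]
  calc |∑ j, M i j * v j| ≤ ∑ j, |M i j * v j| := Finset.abs_sum_le_sum_abs _ _
    _ ≤ ∑ _j : Fin 3, C * ‖v‖ := by
        apply Finset.sum_le_sum
        intro j _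
        rw [abs_mul]
        exact mul_le_mul (h i j) (norm_le_pi_norm v j) (abs_nonneg _) hC
    _ = 3 * C * ‖v‖ := by simp [Fin.sum_univ_three]; ring
/-- entries of an orthogonal matrix are bounded by 1. -/
lemma orth_entry_le_one (M : Matrix (Fin 3) (Fin 3) ℝ) (h : Mᵀ * M = 1)
    (i j : Fin 3) : |M i j| ≤ 1 := by
  have h1 : (Mᵀ * M) j j = ∑ k, M k j * M k j := by
    simp [Matrix.mul_apply, Matrix.transpose_apply]
  have h2 : ∑ k, M k j * M k j = 1 := by rw [← h1, h]; simp
  have h3 : M i j * M i j ≤ 1 := by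
    rw [← h2]
    exact Finset.single_le_sum (fun k _ => mul_self_nonneg (M k j)) (Finset.mem_univ i)
  nlinarith [abs_nonneg (M i j), sq_abs (M i j)]

/-- There exists `𝓜_e ≥ 1`, depending only on `β_e, D_{3,2}, γ, Ω`, bounding the operator
norm of `exp(𝓛τ)` uniformly in `τ ∈ ℝ`. -/
theorem exp_expulsion_matrix_uniformly_bounded (βe D32 γ Ω : ℝ)
    (hβe : 0 < βe) (hD32 : 0 < D32) (hcirc : γ ^ 2 + Ω ^ 2 = 1)
    (abar bbar : ℝ) (ha : abar = -D32 * Ω - βe * γ) (hb : bbar = D32 * γ - βe * Ω)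
    (L : Matrix (Fin 3) (Fin 3) ℝ)
    (hL : L = !![0, 0, abar; 0, 0, bbar; 2 * βe * γ, 2 * βe * Ω, 0]) :
    ∃ Me : ℝ, 1 ≤ Me ∧ ∀ τ : ℝ, ∀ v : Fin 3 → ℝ,
      ‖(NormedSpace.exp (τ • L)).mulVec v‖ ≤ Me * ‖v‖ := by
  set s2 := Real.sqrt 2 with hs2def
  have hs2sq : s2 ^ 2 = 2 := Real.sq_sqrt (by norm_num)
  have hs2pos : 0 < s2 := Real.sqrt_pos.mpr (by norm_num)
  have hs2le : s2 ≤ 2 := by nlinarith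
  have hs2ge : 1 ≤ s2 := by nlinarith
  have key : -γ * abar - Ω * bbar = βe := by
    rw [ha, hb]; nlinarith [hcirc]
  set P : Matrix (Fin 3) (Fin 3) ℝ := !![γ, Ω, 0; 0, 0, s2⁻¹; bbar, -abar, 0] with hP
  set Q : Matrix (Fin 3) (Fin 3) ℝ :=
    !![-abar/βe, 0, -Ω/βe; -bbar/βe, 0, γ/βe; 0, s2, 0] with hQ
  set S : Matrix (Fin 3) (Fin 3) ℝ := !![0, -(s2*βe), 0; s2*βe, 0, 0; 0, 0, 0] with hS
  have hβne : βe ≠ 0 := ne_of_gt hβe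
  have hs2ne : s2 ≠ 0 := ne_of_gt hs2pos
  have hQP : Q * P = 1 := by
    ext i j
    fin_cases i <;> fin_cases j <;>
      simp [hP, hQ, Matrix.mul_apply, Fin.sum_univ_three] <;>
      field_simp <;> nlinarith [key]
  have hPQ : P * Q = 1 := by
    ext i j
    fin_cases i <;> fin_cases j <;>
      simp [hP, hQ, Matrix.mul_apply, Fin.sum_univ_three] <;>
      field_simp <;> nlinarith [key]
  have hPL : P * L = S * P := by
    rw [hL]
    ext i j
    fin_cases i <;> fin_cases j <;>
      simp [hP, hS, Matrix.mul_apply, Fin.sum_univ_three, Matrix.vecHead, Matrix.vecTail] <;>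
      (try field_simp) <;>
      first
        | linear_combination -βe * γ * hs2sq
        | linear_combination βe * γ * hs2sq
        | linear_combination -βe * Ω * hs2sq
        | linear_combination βe * Ω * hs2sq
        | linear_combination -s2 * key
        | linear_combination s2 * key
        | linear_combination γ * hs2sq
        | linear_combination -γ * hs2sq
        | linear_combination Ω * hs2sq
        | linear_combination -Ω * hs2sq
        | linarith [key]
  have hLQSP : L = Q * S * P := by
    calc L = (Q * P) * L := by rw [hQP, one_mul]
    _ = Q * (P * L) := by rw [mul_assoc]
    _ = Q * (S * P) := by rw [hPL]
    _ = Q * S * P := by rw [mul_assoc]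
  have hSt : Sᵀ = -S := by
    ext i j
    fin_cases i <;> fin_cases j <;>
      simp [hS, Matrix.vecHead, Matrix.vecTail]
  -- the unit
  set U : (Matrix (Fin 3) (Fin 3) ℝ)ˣ := ⟨P, Q, hPQ, hQP⟩ with hU
  -- entry bounds
  set Cp : ℝ := |γ| + |Ω| + |abar| + |bbar| + 1 with hCp
  set Cq : ℝ := (|γ| + |Ω| + |abar| + |bbar|)/βe + 2 with hCq
  have hCp0 : 0 ≤ Cp := by positivity
  have hCq0 : 0 ≤ Cq := by positivity
  have hPent : ∀ i j, |P i j| ≤ Cp := by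
    intro i j
    have hinv : |s2|⁻¹ ≤ 1 := by
      rw [abs_of_pos (by positivity)]
      rw [inv_le_one_iff₀]; right; exact hs2ge
    fin_cases i <;> fin_cases j <;>
      simp [hP, hCp, abs_nonneg] <;>
      nlinarith [abs_nonneg γ, abs_nonneg Ω, abs_nonneg abar, abs_nonneg bbar, hinv]
  have hQent : ∀ i j, |Q i j| ≤ Cq := by
    have key2 : ∀ x : ℝ, |x| ≤ |γ| + |Ω| + |abar| + |bbar| → |x / βe| ≤ Cq := by
      intro x hx
      rw [hCq, abs_div, abs_of_pos hβe]
      have h2 : |x| / βe ≤ (|γ| + |Ω| + |abar| + |bbar|) / βe := by gcongr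
      linarith
    have hsum : (0:ℝ) ≤ (|γ| + |Ω| + |abar| + |bbar|) / βe := by positivity
    intro i j
    fin_cases i <;> fin_cases j <;> simp [hQ] <;>
      first
        | exact hCq0
        | (rw [hCq]; rw [abs_of_pos hs2pos]; linarith)
        | (rw [neg_div]; rw [abs_neg]; refine key2 _ ?_;
           nlinarith [abs_nonneg γ, abs_nonneg Ω, abs_nonneg abar, abs_nonneg bbar])
        | (refine key2 _ ?_;
           nlinarith [abs_nonneg γ, abs_nonneg Ω, abs_nonneg abar, abs_nonneg bbar])
  refine ⟨1 + 27 * Cq * Cp, by nlinarith, ?_⟩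
  intro τ v
  have hUinv : ((U⁻¹ : (Matrix (Fin 3) (Fin 3) ℝ)ˣ) : Matrix (Fin 3) (Fin 3) ℝ) = Q := rfl
  have hUco : ((U : (Matrix (Fin 3) (Fin 3) ℝ)ˣ) : Matrix (Fin 3) (Fin 3) ℝ) = P := rfl
  have hconj : τ • L = ((U⁻¹ : (Matrix (Fin 3) (Fin 3) ℝ)ˣ) : Matrix (Fin 3) (Fin 3) ℝ)
      * (τ • S) * ((U : (Matrix (Fin 3) (Fin 3) ℝ)ˣ) : Matrix (Fin 3) (Fin 3) ℝ) := by
    rw [hUinv, hUco, Matrix.mul_smul, Matrix.smul_mul, hLQSP]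
  rw [hconj, Matrix.exp_units_conj' U (τ • S), hUinv, hUco]
  show ‖(Q * NormedSpace.exp (τ • S) * P).mulVec v‖ ≤ _
  set B := NormedSpace.exp (τ • S) with hB
  have hBorth : Bᵀ * B = 1 := by
    have h1 : Bᵀ = NormedSpace.exp (-(τ • S)) := by
      rw [hB, ← Matrix.exp_transpose]
      congr 1
      rw [Matrix.transpose_smul, hSt, smul_neg]
    have h2 := Matrix.exp_add_of_commute (-(τ • S)) (τ • S)
      (Commute.neg_left (Commute.refl _))
    rw [neg_add_cancel, NormedSpace.exp_zero] at h2
    rw [h1, hB]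
    exact h2.symm
  have hBent : ∀ i j, |B i j| ≤ 1 := orth_entry_le_one B hBorth
  have h1 : (Q * B * P).mulVec v = Q.mulVec (B.mulVec (P.mulVec v)) := by
    rw [Matrix.mulVec_mulVec, Matrix.mulVec_mulVec, mul_assoc]
  rw [h1]
  calc ‖Q.mulVec (B.mulVec (P.mulVec v))‖
      ≤ 3 * Cq * ‖B.mulVec (P.mulVec v)‖ := mulVec_norm_le_aux Q Cq hQent _
    _ ≤ 3 * Cq * (3 * 1 * ‖P.mulVec v‖) := by
        apply mul_le_mul_of_nonneg_left (mulVec_norm_le_aux B 1 hBent _) (by positivity)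
    _ ≤ 3 * Cq * (3 * 1 * (3 * Cp * ‖v‖)) := by
        apply mul_le_mul_of_nonneg_left _ (by positivity)
        apply mul_le_mul_of_nonneg_left (mulVec_norm_le_aux P Cp hPent _) (by positivity)
    _ ≤ (1 + 27 * Cq * Cp) * ‖v‖ := by nlinarith [norm_nonneg v]
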